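/- For every positive integer n, the number of even-zeroed balanced 2n-paths equals 2 · ∑_{k=1}^{n} C_{2k−1} · (the number of even-zeroed balanced 2(n−k)-paths). -/

import Mathlib

/-- A path of length `l` is a sequence of `l` steps, each `+1` (up, `true`) or `-1`
(down, `false`). `psum p k` is the partial sum of the first `k` steps of `p`
(the height of the path after `k` steps). -/
def psum {l : ℕ} (p : Fin l → Bool) (k : ℕ) : ℤ :=
  ∑ i ∈ Finset.univ.filter (fun i : Fin l => (i : ℕ) < k), (if p i then (1 : ℤ) else -1)

/-- A path is even-zeroed if every index at which its partial sum is `0`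
(i.e., every `x`-intercept) is divisible by `4`. -/
def IsEvenZeroed {l : ℕ} (p : Fin l → Bool) : Prop :=
  ∀ k ≤ l, psum p k = 0 → 4 ∣ k

/-- A path of length `2m` is balanced if its total sum of steps is `0`
(equivalently, it has `m` up-steps and `m` down-steps). -/
def IsBalanced {l : ℕ} (p : Fin l → Bool) : Prop :=
  psum p l = 0

/-! ### Auxiliary definitions and lemmas -/

open List Finset

def lstep (b : Bool) : ℤ := if b then 1 else -1
def lsum (L : List Bool) : ℤ := (L.map lstep).sum

lemma lsum_cons (b : Bool) (t : List Bool) : lsum (b :: t) = lstep b + lsum t := by simp [lsum]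

lemma lsum_append (A B : List Bool) : lsum (A ++ B) = lsum A + lsum B := by simp [lsum]

lemma lsum_take_succ (L : List Bool) (j : ℕ) (h : j < L.length) :
    lsum (L.take (j + 1)) = lsum (L.take j) + lstep L[j] := by
  rw [← List.take_concat_get' L j h, lsum_append]; simp [lsum]

lemma lstep_cases (b : Bool) : lstep b = 1 ∨ lstep b = -1 := by cases b <;> simp [lstep]

lemma lsum_count (L : List Bool) :
    lsum L = (L.count true : ℤ) - (L.count false : ℤ) := by
  induction L with
  | nil => simp [lsum]
  | cons b t ih =>
    cases b <;> simp [lsum, lstep, List.count_cons] at ih ⊢ <;> omega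

lemma lsum_map_not (L : List Bool) : lsum (L.map Bool.not) = - lsum L := by
  induction L with
  | nil => simp [lsum]
  | cons b t ih => cases b <;> simp [lsum, lstep] at ih ⊢ <;> omega

lemma psum_eq_lsum {l : ℕ} (p : Fin l → Bool) (k : ℕ) :
    psum p k = lsum ((List.ofFn p).take k) := by
  induction k with
  | zero => simp [psum, lsum]
  | succ k ih =>
    by_cases hk : k < l
    · have h1 : Finset.univ.filter (fun i : Fin l => (i : ℕ) < k + 1)
          = insert ⟨k, hk⟩ (Finset.univ.filter (fun i : Fin l => (i : ℕ) < k)) := by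
        ext i; simp [Fin.ext_iff]; omega
      have h2 : (⟨k, hk⟩ : Fin l) ∉ Finset.univ.filter (fun i : Fin l => (i : ℕ) < k) := by
        simp
      rw [psum, h1, Finset.sum_insert h2, ← psum, ih,
        lsum_take_succ _ k (by simpa using hk)]
      simp [lstep, List.getElem_ofFn, add_comm]
    · have h1 : Finset.univ.filter (fun i : Fin l => (i : ℕ) < k + 1)
          = Finset.univ.filter (fun i : Fin l => (i : ℕ) < k) := by
        ext i; simp; omega
      have h2 : List.take (k+1) (List.ofFn p) = List.take k (List.ofFn p) := by
        rw [take_of_length_le (by simp; omega), take_of_length_le (by simp; omega)]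
      rw [psum, h1, ← psum, ih, h2]

def allB (l : ℕ) : Finset (List Bool) := (Finset.univ : Finset (Fin l → Bool)).image List.ofFn

lemma ofFn_get_eq {l : ℕ} (L : List Bool) (h : L.length = l) :
    List.ofFn (fun i : Fin l => L[(i : ℕ)]'(h ▸ i.2)) = L := by
  subst h; exact List.ofFn_getElem

lemma mem_allB {l : ℕ} {L : List Bool} : L ∈ allB l ↔ L.length = l := by
  constructor
  · rintro h
    simp only [allB, Finset.mem_image] at h
    obtain ⟨p, -, rfl⟩ := h
    simp
  · intro h
    simp only [allB, Finset.mem_image]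
    exact ⟨fun i : Fin l => L[(i : ℕ)]'(h ▸ i.2), Finset.mem_univ _, ofFn_get_eq L h⟩

/-! ### Dyck-type (nonnegative) paths and Catalan numbers -/

def NN (L : List Bool) : Prop := lsum L = 0 ∧ ∀ j ≤ L.length, 0 ≤ lsum (L.take j)

instance : DecidablePred NN := fun L => by unfold NN; infer_instance

def DyS (l : ℕ) : Finset (List Bool) := (allB l).filter NN

def boolToStep (b : Bool) : DyckStep := bif b then DyckStep.U else DyckStep.D
def stepToBool (s : DyckStep) : Bool := match s with | DyckStep.U => true | DyckStep.D => false
lemma boolToStep_inj : Function.Injective boolToStep := by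
  intro a b h; cases a <;> cases b <;> simp_all [boolToStep]
lemma stepToBool_inj : Function.Injective stepToBool := by
  intro a b h; cases a <;> cases b <;> simp_all [stepToBool]
def toD : List Bool → List DyckStep := List.map boolToStep
def fromD : List DyckStep → List Bool := List.map stepToBool

lemma count_toD_U (L : List Bool) : (toD L).count DyckStep.U = L.count true :=
  L.count_map_of_injective _ boolToStep_inj true
lemma count_toD_D (L : List Bool) : (toD L).count DyckStep.D = L.count false :=
  L.count_map_of_injective _ boolToStep_inj false
lemma count_fromD_true (M : List DyckStep) : (fromD M).count true = M.count DyckStep.U :=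
  M.count_map_of_injective _ stepToBool_inj DyckStep.U
lemma count_fromD_false (M : List DyckStep) : (fromD M).count false = M.count DyckStep.D :=
  M.count_map_of_injective _ stepToBool_inj DyckStep.D

lemma fromD_toD (L : List Bool) : fromD (toD L) = L := by
  rw [fromD, toD, List.map_map]
  convert List.map_id L
  funext b; cases b <;> rfl

lemma toD_fromD (M : List DyckStep) : toD (fromD M) = M := by
  rw [fromD, toD, List.map_map]
  convert List.map_id M
  funext s; cases s <;> rfl

lemma DyS_card (d : ℕ) : (DyS (2 * d)).card = catalan d := by
  rw [← Nat.card_eq_finsetCard, ← DyckWord.card_dyckWord_semilength_eq_catalan,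
    ← Nat.card_eq_fintype_card]
  apply Nat.card_congr
  refine
    { toFun := fun L => ⟨⟨toD L.1, ?_, ?_⟩, ?_⟩
      invFun := fun D => ⟨fromD D.1.toList, ?_⟩
      left_inv := fun L => Subtype.ext (fromD_toD L.1)
      right_inv := fun D => Subtype.ext (by apply DyckWord.ext; exact toD_fromD D.1.toList) }
  · obtain ⟨h1, h2⟩ := (Finset.mem_filter.mp L.2)
    have hb := h2.1
    rw [lsum_count] at hb
    rw [count_toD_U, count_toD_D]; omega
  · intro i
    obtain ⟨h1, h2⟩ := (Finset.mem_filter.mp L.2)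
    have hpre : 0 ≤ lsum (L.1.take i) := by
      rcases le_or_gt i L.1.length with h | h
      · exact h2.2 i h
      · rw [List.take_of_length_le h.le, h2.1]
    rw [show (toD L.1).take i = toD (L.1.take i) by rw [toD, List.map_take],
      count_toD_U, count_toD_D]
    rw [lsum_count] at hpre; omega
  · obtain ⟨h1, h2⟩ := (Finset.mem_filter.mp L.2)
    have hlen : L.1.length = 2 * d := mem_allB.mp h1
    have hb := h2.1
    rw [lsum_count] at hb
    have hct : L.1.count true + L.1.count false = L.1.length :=
      List.count_true_add_count_false L.1
    show (toD L.1).count DyckStep.U = d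
    rw [count_toD_U]; omega
  · rcases D with ⟨D, hD⟩
    rw [DyS, Finset.mem_filter, mem_allB]
    refine ⟨?_, ?_, ?_⟩
    · rw [fromD, List.length_map, ← D.two_mul_semilength_eq_length, hD]
    · rw [lsum_count, count_fromD_true, count_fromD_false, D.count_U_eq_count_D]; ring
    · intro j hj
      rw [show (fromD D.toList).take j = fromD (D.toList.take j) by rw [fromD, List.map_take],
        lsum_count, count_fromD_true, count_fromD_false]
      have := D.count_D_le_count_U j
      omega

/-! ### First-return paths -/

def FRet (L : List Bool) : Prop := lsum L = 0 ∧ ∀ j < L.length, 0 < j → lsum (L.take j) ≠ 0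
instance : DecidablePred FRet := fun L => by unfold FRet; infer_instance
def FRS (l : ℕ) : Finset (List Bool) := (allB l).filter FRet

lemma take_cons_append (b : Bool) (M T : List Bool) (j : ℕ) (h1 : 0 < j)
    (h2 : j ≤ M.length + 1) : ((b :: (M ++ T))).take j = b :: M.take (j-1) := by
  rcases j with _ | j
  · omega
  · rw [List.take_succ_cons, List.take_append,
      show j - M.length = 0 by omega, List.take_zero, List.append_nil]
    rfl

lemma frs_pos {L : List Bool} (hF : FRet L) (h0 : 0 < L.length)
    (ht : L[0]'h0 = true) : ∀ j, 0 < j → j < L.length → 1 ≤ lsum (L.take j) := by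
  intro j
  induction j with
  | zero => omega
  | succ j ih =>
    intro _ hlt
    rcases Nat.eq_zero_or_pos j with rfl | hj
    · rw [lsum_take_succ L 0 h0, ht]
      simp [lsum, lstep]
    · have h1 : 1 ≤ lsum (L.take j) := ih hj (by omega)
      have h2 := lsum_take_succ L j (by omega)
      have h3 := hF.2 (j+1) hlt (by omega)
      rcases lstep_cases (L[j]'(by omega)) with h | h <;> omega

section decomp
variable {m : ℕ} {L : List Bool} (hm : 1 ≤ m) (hlen : L.length = 2*m) (hF : FRet L)
  (hhead : L.headI = true)

include hm hlen hF hhead in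
lemma frs_last : lsum (L.take (2*m-1)) = 1 ∧ L[2*m-1]'(by omega) = false := by
  have h0 : 0 < L.length := by omega
  have hL0 : L[0]'h0 = true := by
    rcases L with _ | ⟨b, t⟩
    · simp at h0
    · simpa using hhead
  have hpos := frs_pos hF h0 hL0
  have h2 := lsum_take_succ L (2*m-1) (by omega)
  rw [show 2*m-1+1 = 2*m by omega, List.take_of_length_le (by omega)] at h2
  have h3 : 1 ≤ lsum (L.take (2*m-1)) := hpos (2*m-1) (by omega) (by omega)
  rw [hF.1] at h2
  rcases lstep_cases (L[2*m-1]'(by omega)) with h | h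
  · omega
  · refine ⟨by omega, ?_⟩
    cases hb : L[2*m-1]'(by omega)
    · rfl
    · rw [hb] at h; simp [lstep] at h

include hm hlen hF hhead in
lemma frs_decomp : L = true :: (((L.drop 1).dropLast) ++ [false]) := by
  have h0 : 0 < L.length := by omega
  have hL0 : L[0]'h0 = true := by
    rcases L with _ | ⟨b, t⟩
    · simp at h0
    · simpa using hhead
  have h1 : L = L[0]'h0 :: L.drop 1 := by
    rcases L with _ | ⟨b, t⟩
    · simp at h0
    · rfl
  have h2 : L.drop 1 ≠ [] := by
    intro h
    have := congrArg List.length h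
    simp [hlen] at this; omega
  have h3 : (L.drop 1).dropLast ++ [(L.drop 1).getLast h2] = L.drop 1 :=
    List.dropLast_append_getLast h2
  have h4 : (L.drop 1).getLast h2 = L[2*m-1]'(by omega) := by
    rw [List.getLast_eq_getElem, List.getElem_drop]
    congr 1
    simp [hlen]
    omega
  conv_lhs => rw [h1]
  rw [hL0]
  congr 1
  conv_lhs => rw [← h3]
  rw [h4, (frs_last hm hlen hF hhead).2]

end decomp

lemma pos_card (m : ℕ) (hm : 1 ≤ m) :
    ((FRS (2*m)).filter (fun L => L.headI = true)).card = catalan (m - 1) := by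
  rw [← DyS_card (m-1)]
  refine Finset.card_bij' (fun L _ => (L.drop 1).dropLast)
    (fun M _ => true :: (M ++ [false])) ?_ ?_ ?_ ?_
  · intro L hL
    rw [Finset.mem_filter] at hL
    obtain ⟨hL, hhead⟩ := hL
    rw [FRS, Finset.mem_filter, mem_allB] at hL
    obtain ⟨hlen, hF⟩ := hL
    have h0 : 0 < L.length := by omega
    have hL0 : L[0]'h0 = true := by
      rcases L with _ | ⟨b, t⟩
      · simp at h0
      · simpa using hhead
    have hpos := frs_pos hF h0 hL0
    have hlast := frs_last hm hlen hF hhead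
    have hdec := frs_decomp hm hlen hF hhead
    rw [DyS, Finset.mem_filter, mem_allB]
    have hlen' : ((L.drop 1).dropLast).length = 2 * (m - 1) := by
      simp [hlen]; omega
    set M := (L.drop 1).dropLast with hM
    have htake : ∀ j ≤ 2*(m-1), L.take (j+1) = true :: M.take j := by
      intro j hj
      conv_lhs => rw [hdec]
      rw [take_cons_append true M [false] (j+1) (by omega) (by omega)]
      simp
    have hsum : ∀ j ≤ 2*(m-1), lsum (M.take j) = lsum (L.take (j+1)) - 1 := by
      intro j hj
      rw [htake j hj, lsum_cons]
      simp [lstep]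
    refine ⟨hlen', ?_, ?_⟩
    · show lsum M = 0
      have h6 := hsum (2*(m-1)) le_rfl
      rw [List.take_of_length_le (le_of_eq hlen')] at h6
      have h5 : lsum (L.take (2*(m-1)+1)) = 1 := by
        rw [show 2*(m-1)+1 = 2*m-1 by omega]
        exact hlast.1
      omega
    · intro j hj
      rw [hlen'] at hj
      rw [hsum j hj]
      have := hpos (j+1) (by omega) (by omega)
      omega
  · intro M hM
    rw [DyS, Finset.mem_filter, mem_allB] at hM
    obtain ⟨hlen, hNN⟩ := hM
    rw [Finset.mem_filter, FRS, Finset.mem_filter, mem_allB]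
    refine ⟨⟨by simp [hlen]; omega, ?_, ?_⟩, rfl⟩
    · rw [lsum_cons, lsum_append, hNN.1]
      simp [lsum, lstep]
    · intro j hjlt hj0
      have hjlen : j ≤ M.length + 1 := by
        simp at hjlt
        omega
      rw [take_cons_append true M [false] j hj0 hjlen, lsum_cons]
      have h1 : 0 ≤ lsum (M.take (j-1)) := hNN.2 _ (by omega)
      simp [lstep]
      omega
  · intro L hL
    rw [Finset.mem_filter] at hL
    obtain ⟨hL, hhead⟩ := hL
    rw [FRS, Finset.mem_filter, mem_allB] at hL
    obtain ⟨hlen, hF⟩ := hL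
    exact (frs_decomp hm hlen hF hhead).symm
  · intro M hM
    simp

lemma frs_not_mem {l : ℕ} {L : List Bool} (h : L ∈ FRS l) : L.map Bool.not ∈ FRS l := by
  rw [FRS, Finset.mem_filter, mem_allB] at h ⊢
  obtain ⟨hlen, hF⟩ := h
  refine ⟨by simp [hlen], ?_, ?_⟩
  · rw [lsum_map_not, hF.1]; ring
  · intro j hj hj0
    rw [← List.map_take, lsum_map_not]
    have := hF.2 j (by simpa using hj) hj0
    omega

lemma frs_card (m : ℕ) (hm : 1 ≤ m) : (FRS (2*m)).card = 2 * catalan (m-1) := by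
  have hpart := Finset.card_filter_add_card_filter_not
    (s := FRS (2*m)) (p := fun L => L.headI = true)
  have hneg : ((FRS (2*m)).filter (fun L => ¬ L.headI = true)).card
      = ((FRS (2*m)).filter (fun L => L.headI = true)).card := by
    refine Finset.card_bij' (fun L _ => L.map Bool.not) (fun L _ => L.map Bool.not) ?_ ?_ ?_ ?_
    · intro L hL
      rw [Finset.mem_filter] at hL ⊢
      obtain ⟨hL, hhead⟩ := hL
      refine ⟨frs_not_mem hL, ?_⟩
      have hlen : L.length = 2*m := mem_allB.mp (Finset.mem_filter.mp hL).1
      rcases L with _ | ⟨b, t⟩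
      · simp at hlen; omega
      · cases b
        · rfl
        · simp at hhead
    · intro L hL
      rw [Finset.mem_filter] at hL ⊢
      obtain ⟨hL, hhead⟩ := hL
      refine ⟨frs_not_mem hL, ?_⟩
      have hlen : L.length = 2*m := mem_allB.mp (Finset.mem_filter.mp hL).1
      rcases L with _ | ⟨b, t⟩
      · simp at hlen; omega
      · cases b
        · simp at hhead
        · simp
    · intro L _
      simp only [List.map_map]
      have h : (Bool.not ∘ Bool.not) = id := by funext b; cases b <;> rfl
      rw [h, List.map_id]
    · intro L _
      simp only [List.map_map]
      have h : (Bool.not ∘ Bool.not) = id := by funext b; cases b <;> rfl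
      rw [h, List.map_id]
  rw [pos_card m hm] at hpart hneg
  omega

/-! ### Even-zeroed balanced paths -/

def Bal (L : List Bool) : Prop := lsum L = 0
def EZ (L : List Bool) : Prop := ∀ k ≤ L.length, lsum (L.take k) = 0 → 4 ∣ k

instance : DecidablePred (fun L => Bal L ∧ EZ L) := fun L => by unfold Bal EZ; infer_instance

def EZB (l : ℕ) : Finset (List Bool) := (allB l).filter (fun L => Bal L ∧ EZ L)

lemma balanced_iff {l : ℕ} (p : Fin l → Bool) : IsBalanced p ↔ Bal (List.ofFn p) := by
  rw [IsBalanced, Bal, psum_eq_lsum, List.take_of_length_le (by simp)]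

lemma evenZeroed_iff {l : ℕ} (p : Fin l → Bool) : IsEvenZeroed p ↔ EZ (List.ofFn p) := by
  constructor
  · intro h k hk h0
    exact h k (by simpa using hk) (by rw [psum_eq_lsum]; exact h0)
  · intro h k hk h0
    exact h k (by simpa) (by rw [← psum_eq_lsum]; exact h0)

lemma natCard_eq (l : ℕ) :
    Nat.card {p : Fin l → Bool // IsBalanced p ∧ IsEvenZeroed p} = (EZB l).card := by
  rw [← Nat.card_eq_finsetCard]
  apply Nat.card_eq_of_bijective
    (f := fun p => (⟨List.ofFn p.1, by
      rw [EZB, Finset.mem_filter, mem_allB]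
      exact ⟨by simp, (balanced_iff p.1).mp p.2.1, (evenZeroed_iff p.1).mp p.2.2⟩⟩ :
      {L : List Bool // L ∈ EZB l}))
  constructor
  · intro p q h
    exact Subtype.ext (List.ofFn_injective (congrArg Subtype.val h))
  · rintro ⟨L, hL⟩
    have hlen : L.length = l := mem_allB.mp (Finset.mem_filter.mp hL).1
    obtain ⟨hb, he⟩ := (Finset.mem_filter.mp hL).2
    refine ⟨⟨fun i : Fin l => L[(i : ℕ)]'(hlen ▸ i.2), ?_, ?_⟩, ?_⟩
    · rw [balanced_iff, ofFn_get_eq L hlen]; exact hb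
    · rw [evenZeroed_iff, ofFn_get_eq L hlen]; exact he
    · exact Subtype.ext (ofFn_get_eq L hlen)

lemma EZB_decomp (n : ℕ) (hn : 0 < n) :
    EZB (4*n) = (Finset.Icc 1 n).biUnion (fun k =>
      (FRS (4*k) ×ˢ EZB (4*(n-k))).image (fun AB : List Bool × List Bool => AB.1 ++ AB.2)) := by
  ext L
  constructor
  · intro hL
    have hlen : L.length = 4*n := mem_allB.mp (Finset.mem_filter.mp hL).1
    obtain ⟨hb, he⟩ := (Finset.mem_filter.mp hL).2
    have hex : ∃ j, 0 < j ∧ lsum (L.take j) = 0 := by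
      refine ⟨4*n, by omega, ?_⟩
      rw [List.take_of_length_le (by omega)]; exact hb
    set r := Nat.find hex with hr
    have hspec := Nat.find_spec hex
    rw [← hr] at hspec
    obtain ⟨hr0, hrs⟩ := hspec
    have hrle : r ≤ 4*n := Nat.find_min' hex ⟨by omega, by
      rw [List.take_of_length_le (by omega)]; exact hb⟩
    have hdvd : 4 ∣ r := he r (by omega) hrs
    obtain ⟨k, hk⟩ := hdvd
    have hk1 : 1 ≤ k := by omega
    have hkn : k ≤ n := by omega
    rw [Finset.mem_biUnion]
    refine ⟨k, Finset.mem_Icc.mpr ⟨hk1, hkn⟩, ?_⟩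
    have hFRS : L.take r ∈ FRS (4*k) := by
      rw [FRS, Finset.mem_filter, mem_allB]
      refine ⟨by rw [List.length_take]; omega, ?_, ?_⟩
      · show lsum (L.take r) = 0
        exact hrs
      · intro j hjlt hj0
        rw [List.length_take] at hjlt
        rw [List.take_take, min_eq_left (by omega)]
        have := Nat.find_min hex (m := j) (by omega)
        push_neg at this
        exact this hj0
    have hEZB : L.drop r ∈ EZB (4*(n-k)) := by
      rw [EZB, Finset.mem_filter, mem_allB]
      have hsplit : ∀ j, lsum (L.take (r + j)) = lsum ((L.drop r).take j) := by
        intro j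
        rw [List.take_add, lsum_append, hrs, zero_add]
      refine ⟨by rw [List.length_drop]; omega, ?_, ?_⟩
      · have h1 : lsum (L.take r) + lsum (L.drop r) = 0 := by
          rw [← lsum_append, List.take_append_drop]; exact hb
        rw [Bal]; rw [hrs] at h1; omega
      · intro j hj h0
        rw [List.length_drop] at hj
        rw [← hsplit j] at h0
        have := he (r + j) (by omega) h0
        omega
    rw [Finset.mem_image]
    exact ⟨(L.take r, L.drop r), Finset.mem_product.mpr ⟨hFRS, hEZB⟩,
      List.take_append_drop r L⟩
  · intro hL
    rw [Finset.mem_biUnion] at hL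
    obtain ⟨k, hk, hL⟩ := hL
    rw [Finset.mem_Icc] at hk
    rw [Finset.mem_image] at hL
    obtain ⟨⟨A, B⟩, hAB, rfl⟩ := hL
    show A ++ B ∈ EZB (4*n)
    rw [Finset.mem_product] at hAB
    obtain ⟨hA, hB⟩ := hAB
    replace hA : A ∈ FRS (4*k) := hA
    replace hB : B ∈ EZB (4*(n-k)) := hB
    rw [FRS, Finset.mem_filter, mem_allB] at hA
    obtain ⟨hAlen, hAf⟩ := hA
    rw [EZB, Finset.mem_filter, mem_allB] at hB
    obtain ⟨hBlen, hBb, hBe⟩ := hB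
    rw [EZB, Finset.mem_filter, mem_allB]
    refine ⟨by simp [hAlen, hBlen]; omega, ?_, ?_⟩
    · rw [Bal, lsum_append, hAf.1, hBb]; ring
    · intro j hj h0
      simp only [List.length_append, hAlen, hBlen] at hj
      rcases le_or_gt j (4*k) with hcase | hcase
      · rw [List.take_append, show j - A.length = 0 by omega,
          List.take_zero, List.append_nil] at h0
        rcases Nat.eq_zero_or_pos j with rfl | hj0
        · exact ⟨0, rfl⟩
        · rcases Nat.lt_or_ge j (4*k) with hlt | hge
          · exact absurd h0 (hAf.2 j (by omega) hj0)
          · have : j = 4*k := by omega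
            omega
      · rw [List.take_append, List.take_of_length_le (by omega),
          lsum_append, hAf.1, zero_add] at h0
        have := hBe (j - A.length) (by omega) h0
        rw [hAlen] at this
        omega

lemma no_overlap {k k' : ℕ} (hk : 1 ≤ k) (hkk : k < k') {A B A' B' : List Bool}
    (hA : A ∈ FRS (4*k)) (hA' : A' ∈ FRS (4*k')) (h : A ++ B = A' ++ B') : False := by
  rw [FRS, Finset.mem_filter, mem_allB] at hA hA'
  obtain ⟨hAlen, hAf⟩ := hA
  obtain ⟨hA'len, hA'f⟩ := hA'
  have h1 : (A ++ B).take (4*k) = A := by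
    rw [List.take_append, show 4*k - A.length = 0 by omega,
      List.take_zero, List.append_nil, List.take_of_length_le (by omega)]
  have h2 : (A' ++ B').take (4*k) = A'.take (4*k) := by
    rw [List.take_append, show 4*k - A'.length = 0 by omega,
      List.take_zero, List.append_nil]
  have h3 : lsum (A'.take (4*k)) = 0 := by
    rw [← h2, ← h, h1]; exact hAf.1
  exact hA'f.2 (4*k) (by omega) (by omega) h3

lemma EZB_card (n : ℕ) (hn : 0 < n) :
    (EZB (4*n)).card = ∑ k ∈ Finset.Icc 1 n, (FRS (4*k)).card * (EZB (4*(n-k))).card := by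
  rw [EZB_decomp n hn, Finset.card_biUnion]
  · apply Finset.sum_congr rfl
    intro k hk
    rw [Finset.card_image_of_injOn, Finset.card_product]
    rintro ⟨A, B⟩ hAB ⟨A', B'⟩ hAB' heq
    simp only [Finset.mem_coe, Finset.mem_product] at hAB hAB'
    have hAlen : A.length = 4*k := mem_allB.mp (Finset.mem_filter.mp hAB.1).1
    have hA'len : A'.length = 4*k := mem_allB.mp (Finset.mem_filter.mp hAB'.1).1
    replace heq : A ++ B = A' ++ B' := heq
    obtain ⟨h1, h2⟩ := List.append_inj heq (by omega)
    rw [Prod.mk.injEq]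
    exact ⟨h1, h2⟩
  · intro k hk k' hk' hne
    rw [Finset.mem_coe, Finset.mem_Icc] at hk hk'
    rw [Function.onFun, Finset.disjoint_left]
    rintro L hL hL'
    rw [Finset.mem_image] at hL hL'
    obtain ⟨⟨A, B⟩, hAB, rfl⟩ := hL
    obtain ⟨⟨A', B'⟩, hAB', heq⟩ := hL'
    rw [Finset.mem_product] at hAB hAB'
    replace heq : A' ++ B' = A ++ B := heq
    rcases Nat.lt_or_ge k k' with h | h
    · exact no_overlap hk.1 h hAB.1 hAB'.1 heq.symm
    · exact no_overlap hk'.1 (by omega) hAB'.1 hAB.1 heq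

/-- For every positive integer `n`, the number of even-zeroed balanced `2n`-paths equals
`2 ∑_{k=1}^{n} C_{2k−1} ·` (the number of even-zeroed balanced `2(n−k)`-paths). -/
theorem card_evenZeroed_balanced_recursion (n : ℕ) (hn : 0 < n) :
    Nat.card {p : Fin (2 * (2 * n)) → Bool // IsBalanced p ∧ IsEvenZeroed p} =
      2 * ∑ k ∈ Finset.Icc 1 n, catalan (2 * k - 1) *
        Nat.card {p : Fin (2 * (2 * (n - k))) → Bool // IsBalanced p ∧ IsEvenZeroed p} := by
  rw [show (2 : ℕ) * (2 * n) = 4 * n by ring, natCard_eq (4*n), EZB_card n hn, Finset.mul_sum]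
  apply Finset.sum_congr rfl
  intro k hk
  rw [Finset.mem_Icc] at hk
  rw [show (2 : ℕ) * (2 * (n - k)) = 4 * (n - k) by ring, natCard_eq (4*(n-k))]
  rw [show (4 : ℕ) * k = 2 * (2 * k) by ring, frs_card (2*k) (by omega)]
  ring
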